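/- Let H be the subgroup of GL₂(ℤ/8ℤ) generated by the four matrices [[4,3],[1,4]], [[2,1],[1,2]], [[3,6],[2,7]], [[1,2],[6,3]]. Then H has order 2⁶ = 64 (hence index 2³·3 = 24 in GL₂(ℤ/8ℤ)) and H contains exactly 16 elements of trace 0. -/

import Mathlib

set_option maxRecDepth 8000

namespace Galois8

abbrev M8 := Matrix (Fin 2) (Fin 2) (ZMod 8)
abbrev Q := ZMod 8 × ZMod 8 × ZMod 8 × ZMod 8

def mul4 (q r : Q) : Q :=
  (q.1 * r.1 + q.2.1 * r.2.2.1, q.1 * r.2.1 + q.2.1 * r.2.2.2,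
   q.2.2.1 * r.1 + q.2.2.2 * r.2.2.1, q.2.2.1 * r.2.1 + q.2.2.2 * r.2.2.2)

def quad (m : M8) : Q := (m 0 0, m 0 1, m 1 0, m 1 1)

def mkq (q : Q) : M8 := !![q.1, q.2.1; q.2.2.1, q.2.2.2]

def gq : Fin 4 → Q := ![(4, 3, 1, 4), (2, 1, 1, 2), (3, 6, 2, 7), (1, 2, 6, 3)]

def wp : List (Fin 4) → Q
  | [] => (1, 0, 0, 1)
  | i :: w => mul4 (gq i) (wp w)

def PQ : List (Q × Q × List (Fin 4)) := [
  ((1, 0, 0, 1), (1, 0, 0, 1), []),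
  ((4, 3, 1, 4), (4, 1, 3, 4), [0]),
  ((2, 1, 1, 2), (6, 5, 5, 6), [1]),
  ((3, 6, 2, 7), (7, 2, 6, 3), [2]),
  ((1, 2, 6, 3), (5, 2, 6, 7), [3]),
  ((3, 0, 0, 3), (3, 0, 0, 3), [0, 0]),
  ((3, 2, 6, 1), (7, 2, 6, 5), [0, 1]),
  ((2, 5, 3, 2), (2, 7, 1, 2), [0, 2]),
  ((6, 1, 1, 6), (2, 5, 5, 2), [0, 3]),
  ((5, 4, 4, 5), (5, 4, 4, 5), [1, 1]),
  ((0, 3, 7, 4), (4, 7, 3, 0), [1, 2]),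
  ((0, 7, 5, 0), (0, 5, 7, 0), [1, 3]),
  ((2, 1, 7, 2), (2, 3, 5, 2), [2, 0]),
  ((4, 7, 3, 0), (0, 3, 7, 4), [2, 1]),
  ((7, 0, 4, 1), (7, 0, 4, 1), [2, 3]),
  ((6, 3, 3, 6), (2, 7, 7, 2), [3, 0]),
  ((4, 5, 7, 4), (4, 7, 5, 4), [3, 1]),
  ((7, 4, 0, 1), (7, 4, 0, 1), [3, 2]),
  ((5, 0, 0, 5), (5, 0, 0, 5), [3, 3]),
  ((4, 1, 3, 4), (4, 3, 1, 4), [0, 0, 0]),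
  ((1, 2, 6, 5), (5, 6, 2, 1), [0, 0, 2]),
  ((3, 6, 2, 1), (7, 6, 2, 5), [0, 0, 3]),
  ((5, 0, 4, 3), (5, 0, 4, 3), [0, 1, 2]),
  ((7, 4, 4, 7), (7, 4, 4, 7), [0, 1, 3]),
  ((5, 2, 6, 1), (1, 6, 2, 5), [0, 2, 0]),
  ((1, 4, 0, 7), (1, 4, 0, 7), [0, 2, 1]),
  ((1, 6, 2, 3), (5, 6, 2, 7), [0, 3, 0]),
  ((4, 3, 7, 0), (0, 7, 3, 4), [0, 3, 2]),
  ((4, 7, 5, 4), (4, 5, 7, 4), [0, 3, 3]),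
  ((6, 5, 5, 6), (2, 1, 1, 2), [1, 1, 1]),
  ((7, 2, 6, 3), (3, 6, 2, 7), [1, 1, 2]),
  ((5, 6, 2, 7), (1, 6, 2, 3), [1, 1, 3]),
  ((3, 4, 0, 5), (3, 4, 0, 5), [1, 2, 0]),
  ((7, 6, 2, 5), (3, 6, 2, 1), [1, 3, 1]),
  ((6, 1, 7, 6), (6, 3, 5, 6), [1, 3, 2]),
  ((2, 5, 5, 2), (6, 1, 1, 6), [1, 3, 3]),
  ((5, 4, 0, 3), (5, 4, 0, 3), [2, 0, 1]),
  ((0, 3, 1, 0), (0, 1, 3, 0), [2, 0, 2]),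
  ((0, 7, 3, 4), (4, 3, 7, 0), [2, 0, 3]),
  ((6, 5, 3, 6), (6, 7, 1, 6), [2, 1, 3]),
  ((4, 5, 1, 0), (0, 1, 5, 4), [2, 3, 0]),
  ((6, 7, 1, 6), (6, 5, 3, 6), [2, 3, 1]),
  ((5, 2, 6, 7), (1, 2, 6, 3), [2, 3, 2]),
  ((7, 6, 2, 3), (3, 2, 6, 7), [2, 3, 3]),
  ((0, 1, 5, 4), (4, 5, 1, 0), [3, 0, 2]),
  ((0, 5, 7, 0), (0, 7, 5, 0), [3, 0, 3]),
  ((6, 3, 5, 6), (6, 1, 7, 6), [3, 1, 2]),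
  ((2, 7, 7, 2), (6, 3, 3, 6), [3, 1, 3]),
  ((0, 5, 1, 4), (4, 1, 5, 0), [3, 2, 0]),
  ((2, 7, 1, 2), (2, 5, 3, 2), [3, 2, 1]),
  ((2, 3, 3, 2), (6, 7, 7, 6), [0, 0, 0, 3]),
  ((7, 0, 0, 7), (7, 0, 0, 7), [0, 0, 3, 3]),
  ((5, 6, 2, 1), (1, 2, 6, 5), [0, 1, 3, 2]),
  ((7, 2, 6, 5), (3, 2, 6, 1), [0, 1, 3, 3]),
  ((4, 1, 5, 0), (0, 5, 1, 4), [0, 2, 0, 1]),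
  ((3, 4, 4, 3), (3, 4, 4, 3), [0, 2, 0, 2]),
  ((1, 0, 4, 7), (1, 0, 4, 7), [0, 2, 0, 3]),
  ((1, 6, 2, 5), (5, 2, 6, 1), [0, 2, 1, 3]),
  ((3, 0, 4, 5), (3, 0, 4, 5), [0, 3, 2, 0]),
  ((3, 2, 6, 7), (7, 6, 2, 3), [0, 3, 2, 1]),
  ((0, 1, 3, 0), (0, 3, 1, 0), [1, 1, 3, 1]),
  ((1, 4, 4, 1), (1, 4, 4, 1), [1, 1, 3, 3]),
  ((2, 3, 5, 2), (2, 1, 7, 2), [1, 2, 0, 1]),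
  ((6, 7, 7, 6), (2, 3, 3, 2), [2, 3, 2, 0])]

def LQ : List Q := PQ.map (·.1)

theorem quad_injective : Function.Injective quad := by
  intro a b h
  simp only [quad, Prod.mk.injEq] at h
  ext i j
  fin_cases i <;> fin_cases j <;>
    first
      | exact h.1
      | exact h.2.1
      | exact h.2.2.1
      | exact h.2.2.2

theorem quad_mul (a b : M8) : quad (a * b) = mul4 (quad a) (quad b) := by
  simp [quad, mul4, Matrix.mul_apply, Fin.sum_univ_two]

theorem quad_one : quad (1 : M8) = (1, 0, 0, 1) := by decide

theorem quad_mkq (q : Q) : quad (mkq q) = q := rfl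

theorem mul4_one (q : Q) : mul4 q (1, 0, 0, 1) = q := by
  simp [mul4]

theorem mkq_quad (m : M8) : mkq (quad m) = m := (Matrix.etaExpand_eq m)

theorem mul4_eq (a b : Q) : mul4 a b = quad (mkq a * mkq b) := by
  rw [quad_mul, quad_mkq, quad_mkq]

theorem mul4_assoc (a b c : Q) : mul4 (mul4 a b) c = mul4 a (mul4 b c) := by
  simp only [mul4_eq, mkq_quad, mul_assoc]

theorem fact_inv : ∀ p ∈ PQ, mul4 p.2.1 p.1 = (1, 0, 0, 1) ∧
    mul4 p.1 p.2.1 = (1, 0, 0, 1) ∧ p.2.1 ∈ LQ := by decide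

theorem fact_gen : ∀ i : Fin 4, ∀ a ∈ LQ, mul4 a (gq i) ∈ LQ := by decide

theorem fact_word : ∀ p ∈ PQ, wp p.2.2 = p.1 := by decide

theorem fact_card : LQ.toFinset.card = 64 := by decide

theorem fact_trace :
    (LQ.toFinset.filter (fun q => q.1 + q.2.2.2 = 0)).card = 16 := by decide

theorem mem_LQ_iff (q : Q) : q ∈ LQ ↔ ∃ p ∈ PQ, p.1 = q := by
  simp [LQ, List.mem_map]

/-- LQ is stable under right multiplication by word products. -/
theorem LQ_mul_wp : ∀ (w : List (Fin 4)), ∀ a ∈ LQ, mul4 a (wp w) ∈ LQ := by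
  intro w
  induction w with
  | nil => intro a ha; simpa [wp, mul4_one] using ha
  | cons i w ih =>
      intro a ha
      rw [wp, ← mul4_assoc]
      exact ih _ (fact_gen i a ha)

theorem fact_mul : ∀ a ∈ LQ, ∀ b ∈ LQ, mul4 a b ∈ LQ := by
  intro a ha b hb
  obtain ⟨p, hp, hpb⟩ := (mem_LQ_iff b).mp hb
  rw [← hpb, ← fact_word p hp]
  exact LQ_mul_wp _ a ha

theorem fact_one : ((1 : ZMod 8), (0 : ZMod 8), (0 : ZMod 8), (1 : ZMod 8)) ∈ LQ := by decide

/-- The candidate subgroup. -/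
def K : Subgroup (GL (Fin 2) (ZMod 8)) where
  carrier := {u | quad (u : M8) ∈ LQ}
  one_mem' := by
    show quad ((1 : GL (Fin 2) (ZMod 8)) : M8) ∈ LQ
    rw [Units.val_one, quad_one]; exact fact_one
  mul_mem' := by
    intro a b ha hb
    show quad ((a * b : GL (Fin 2) (ZMod 8)) : M8) ∈ LQ
    rw [Units.val_mul, quad_mul]
    exact fact_mul _ ha _ hb
  inv_mem' := by
    intro u hu
    obtain ⟨p, hp, hpu⟩ := (mem_LQ_iff _).mp hu
    obtain ⟨hb1, hb2, hbL⟩ := fact_inv p hp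
    rw [hpu] at hb1 hb2
    have h1 : mkq p.2.1 * (u : M8) = 1 := by
      apply quad_injective
      rw [quad_mul, quad_mkq, quad_one, hb1]
    have h2 : (u : M8) * mkq p.2.1 = 1 := by
      apply quad_injective
      rw [quad_mul, quad_mkq, quad_one, hb2]
    have key : ((u⁻¹ : GL (Fin 2) (ZMod 8)) : M8) = mkq p.2.1 := by
      calc ((u⁻¹ : GL (Fin 2) (ZMod 8)) : M8)
          = (u⁻¹ : GL (Fin 2) (ZMod 8)) * ((u : M8) * mkq p.2.1) := by rw [h2, mul_one]
        _ = ((u⁻¹ : GL (Fin 2) (ZMod 8)) * (u : M8)) * mkq p.2.1 := by rw [mul_assoc]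
        _ = mkq p.2.1 := by rw [u.inv_mul, one_mul]
    show quad ((u⁻¹ : GL (Fin 2) (ZMod 8)) : M8) ∈ LQ
    rw [key, quad_mkq]
    exact hbL

/-- Every element of `LQ` lifts to a unit in `K`. -/
theorem lift_mem (q : Q) (hq : q ∈ LQ) :
    ∃ u : GL (Fin 2) (ZMod 8), u ∈ K ∧ quad (u : M8) = q := by
  obtain ⟨p, hp, hpq⟩ := (mem_LQ_iff q).mp hq
  obtain ⟨hb1, hb2, _⟩ := fact_inv p hp
  refine ⟨⟨mkq q, mkq p.2.1, ?_, ?_⟩, ?_, by rw [quad_mkq]⟩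
  · apply quad_injective
    rw [quad_mul, quad_mkq, quad_mkq, quad_one, ← hpq, hb2]
  · apply quad_injective
    rw [quad_mul, quad_mkq, quad_mkq, quad_one, ← hpq, hb1]
  · show quad (mkq q) ∈ LQ
    rw [quad_mkq]; exact hq

/-- Counting `K` : it is in bijection with `LQ.toFinset`. -/
noncomputable def KEquiv : K ≃ {q : Q // q ∈ LQ.toFinset} := by
  refine Equiv.ofBijective
    (fun u => ⟨quad ((u : GL (Fin 2) (ZMod 8)) : M8), List.mem_toFinset.mpr u.2⟩) ⟨?_, ?_⟩
  · intro a b h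
    simp only [Subtype.mk.injEq] at h
    exact Subtype.ext (Units.ext (quad_injective h))
  · rintro ⟨q, hq⟩
    obtain ⟨u, hu, hq'⟩ := lift_mem q (List.mem_toFinset.mp hq)
    exact ⟨⟨u, hu⟩, Subtype.ext hq'⟩

theorem card_K : Nat.card K = 64 := by
  rw [Nat.card_congr KEquiv, Nat.card_eq_fintype_card, Fintype.card_coe]
  exact fact_card

instance : DecidablePred (IsUnit : ZMod 8 → Prop) := fun x =>
  decidable_of_iff (∃ y : ZMod 8, x * y = 1) isUnit_iff_exists_inv.symm

set_option maxHeartbeats 2000000 in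
theorem card_units_Q :
    Fintype.card {q : Q // IsUnit (q.1 * q.2.2.2 - q.2.1 * q.2.2.1)} = 1536 := by
  decide

/-- The full general linear group has 1536 elements. -/
noncomputable def GLEquiv :
    GL (Fin 2) (ZMod 8) ≃ {q : Q // IsUnit (q.1 * q.2.2.2 - q.2.1 * q.2.2.1)} := by
  refine Equiv.ofBijective (fun u => ⟨quad (u : M8), ?_⟩) ⟨?_, ?_⟩
  · have : IsUnit ((u : M8)).det := by
      rw [← Matrix.isUnit_iff_isUnit_det]
      exact u.isUnit
    rwa [Matrix.det_fin_two] at this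
  · intro a b h
    simp only [Subtype.mk.injEq] at h
    exact Units.ext (quad_injective (congrArg Subtype.val h))
  · rintro ⟨q, hq⟩
    have : IsUnit (mkq q).det := by
      rw [Matrix.det_fin_two]
      exact hq
    have hu : IsUnit (mkq q) := (Matrix.isUnit_iff_isUnit_det _).mpr this
    refine ⟨hu.unit, Subtype.ext ?_⟩
    show quad ((hu.unit : GL (Fin 2) (ZMod 8)) : M8) = q
    rw [IsUnit.unit_spec, quad_mkq]

theorem card_GL : Nat.card (GL (Fin 2) (ZMod 8)) = 1536 := by
  rw [Nat.card_congr GLEquiv, Nat.card_eq_fintype_card]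
  exact card_units_Q

end Galois8

open Galois8 in
/-- The subgroup `H` of `GL₂(ℤ/8ℤ)` generated by the matrices
`[[4,3],[1,4]]`, `[[2,1],[1,2]]`, `[[3,6],[2,7]]`, `[[1,2],[6,3]]`
(the image of the mod-8 Galois representation of the elliptic curve
`y² = x³ − 8x² − 2x`) has order `2⁶ = 64`, hence index `2³·3 = 24` in
`GL₂(ℤ/8ℤ)`, and contains exactly `16` elements of trace `0`. -/
theorem galois_image_mod8 (u₁ u₂ u₃ u₄ : GL (Fin 2) (ZMod 8))
    (h₁ : (u₁ : Matrix (Fin 2) (Fin 2) (ZMod 8)) = !![4, 3; 1, 4])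
    (h₂ : (u₂ : Matrix (Fin 2) (Fin 2) (ZMod 8)) = !![2, 1; 1, 2])
    (h₃ : (u₃ : Matrix (Fin 2) (Fin 2) (ZMod 8)) = !![3, 6; 2, 7])
    (h₄ : (u₄ : Matrix (Fin 2) (Fin 2) (ZMod 8)) = !![1, 2; 6, 3]) :
    Nat.card (Subgroup.closure ({u₁, u₂, u₃, u₄} :
        Set (GL (Fin 2) (ZMod 8)))) = 64 ∧
    (Subgroup.closure ({u₁, u₂, u₃, u₄} :
        Set (GL (Fin 2) (ZMod 8)))).index = 24 ∧
    {u : GL (Fin 2) (ZMod 8) |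
        u ∈ Subgroup.closure ({u₁, u₂, u₃, u₄} : Set (GL (Fin 2) (ZMod 8))) ∧
        Matrix.trace (u : Matrix (Fin 2) (Fin 2) (ZMod 8)) = 0}.ncard = 16 := by
  have h1q : quad ((u₁ : GL (Fin 2) (ZMod 8)) : M8) = (4, 3, 1, 4) := by rw [show ((u₁ : GL (Fin 2) (ZMod 8)) : M8) = !![4,3;1,4] from h₁]; rfl
  have h2q : quad ((u₂ : GL (Fin 2) (ZMod 8)) : M8) = (2, 1, 1, 2) := by rw [show ((u₂ : GL (Fin 2) (ZMod 8)) : M8) = !![2,1;1,2] from h₂]; rfl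
  have h3q : quad ((u₃ : GL (Fin 2) (ZMod 8)) : M8) = (3, 6, 2, 7) := by rw [show ((u₃ : GL (Fin 2) (ZMod 8)) : M8) = !![3,6;2,7] from h₃]; rfl
  have h4q : quad ((u₄ : GL (Fin 2) (ZMod 8)) : M8) = (1, 2, 6, 3) := by rw [show ((u₄ : GL (Fin 2) (ZMod 8)) : M8) = !![1,2;6,3] from h₄]; rfl
  set S : Set (GL (Fin 2) (ZMod 8)) := {u₁, u₂, u₃, u₄} with hS
  set g : Fin 4 → GL (Fin 2) (ZMod 8) := ![u₁, u₂, u₃, u₄] with hg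
  have hgq : ∀ i : Fin 4, quad ((g i : GL (Fin 2) (ZMod 8)) : M8) = gq i := by
    intro i
    fin_cases i
    · exact h1q
    · exact h2q
    · exact h3q
    · exact h4q
  have hgmem : ∀ i : Fin 4, g i ∈ Subgroup.closure S := by
    intro i
    apply Subgroup.subset_closure
    fin_cases i
    · exact Set.mem_insert _ _
    · exact Set.mem_insert_iff.mpr (Or.inr (Set.mem_insert _ _))
    · exact Set.mem_insert_iff.mpr (Or.inr (Set.mem_insert_iff.mpr (Or.inr (Set.mem_insert _ _))))
    · exact Set.mem_insert_iff.mpr (Or.inr (Set.mem_insert_iff.mpr (Or.inr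
        (Set.mem_insert_iff.mpr (Or.inr rfl)))))
  have key : ∀ w : List (Fin 4), (w.map g).prod ∈ Subgroup.closure S ∧
      quad (((w.map g).prod : GL (Fin 2) (ZMod 8)) : M8) = wp w := by
    intro w
    induction w with
    | nil =>
        refine ⟨by rw [List.map_nil, List.prod_nil]; exact Subgroup.one_mem _, ?_⟩
        simp only [List.map_nil, List.prod_nil, Units.val_one]
        exact quad_one
    | cons i w ih =>
        rw [List.map_cons, List.prod_cons]

        refine ⟨Subgroup.mul_mem _ (hgmem i) ih.1, ?_⟩
        rw [Units.val_mul, quad_mul, hgq, ih.2, wp]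
  have hCK : Subgroup.closure S = K := by
    apply le_antisymm
    · rw [Subgroup.closure_le]
      rintro x (rfl | rfl | rfl | rfl)
      · have hx : quad ((x : GL (Fin 2) (ZMod 8)) : M8) ∈ LQ := by rw [h1q]; decide
        exact hx
      · have hx : quad ((x : GL (Fin 2) (ZMod 8)) : M8) ∈ LQ := by rw [h2q]; decide
        exact hx
      · have hx : quad ((x : GL (Fin 2) (ZMod 8)) : M8) ∈ LQ := by rw [h3q]; decide
        exact hx
      · have hx : quad ((x : GL (Fin 2) (ZMod 8)) : M8) ∈ LQ := by rw [h4q]; decide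
        exact hx
    · intro u hu
      obtain ⟨p, hp, hpq⟩ := (mem_LQ_iff _).mp hu
      have hword : quad (((p.2.2.map g).prod : GL (Fin 2) (ZMod 8)) : M8)
          = quad ((u : GL (Fin 2) (ZMod 8)) : M8) := by
        rw [(key p.2.2).2, fact_word p hp, hpq]
      have : (p.2.2.map g).prod = u := Units.ext (quad_injective hword)
      exact this ▸ (key p.2.2).1
  refine ⟨?_, ?_, ?_⟩
  · rw [hCK]; exact card_K
  · rw [hCK]
    have h := Subgroup.index_mul_card K
    rw [card_K, card_GL] at h
    omega
  · have himg : (fun u : GL (Fin 2) (ZMod 8) => quad ((u : GL (Fin 2) (ZMod 8)) : M8)) ''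
        {u : GL (Fin 2) (ZMod 8) | u ∈ Subgroup.closure S ∧
          Matrix.trace ((u : GL (Fin 2) (ZMod 8)) : M8) = 0}
        = ↑(LQ.toFinset.filter (fun q => q.1 + q.2.2.2 = 0)) := by
      ext q
      constructor
      · rintro ⟨u, ⟨huC, htr⟩, rfl⟩
        rw [hCK] at huC
        simp only [Finset.coe_filter, Set.mem_setOf_eq, List.mem_toFinset]
        refine ⟨huC, ?_⟩
        rw [Matrix.trace_fin_two] at htr
        exact htr
      · intro hq
        simp only [Finset.coe_filter, Set.mem_setOf_eq, List.mem_toFinset] at hq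
        obtain ⟨u, huK, hqu⟩ := lift_mem q hq.1
        refine ⟨u, ⟨hCK ▸ huK, ?_⟩, hqu⟩
        rw [Matrix.trace_fin_two]
        have := hq.2
        rw [← hqu] at this
        exact this
    have hinj : Function.Injective
        (fun u : GL (Fin 2) (ZMod 8) => quad ((u : GL (Fin 2) (ZMod 8)) : M8)) :=
      fun a b h => Units.ext (quad_injective h)
    rw [← Set.ncard_image_of_injective _ hinj, himg, Set.ncard_coe_finset]
    exact fact_trace
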